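/- Let b be an indeterminate, Y(t) the unique power series with Y(0)=0 satisfying Y = t(Y³ + bY + 1), and S(t) = 1/(1 - tb - 3tY(t)²). Then d/dt log S(t) = ((4b³ + 27)t² - 8tb² + 4b)/(4(1-bt)³ - 27t³) + 9tY(t)/(4(1-bt)³ - 27t³), as an identity of formal power series in t over ℚ(b). -/

import Mathlib

open PowerSeries

/-- **Equation (7): the logarithmic derivative of `S_x(x;t)`.**
Work in `ℚ(b)[[t]]`.  Let `Y(t)` be the unique power series with `Y(0) = 0`
satisfying `Y = t(Y³ + bY + 1)`, and let `S(t) = 1/(1 - tb - 3tY(t)²)`.  Then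
`d/dt log S = ((4b³+27)t² - 8tb² + 4b)/(4(1-bt)³ - 27t³)
  + 9tY(t)/(4(1-bt)³ - 27t³)`,
stated in the cross-multiplied form
`S'·(4(1-bt)³ - 27t³) = S·((4b³+27)t² - 8tb² + 4b + 9tY)`,
which is equivalent since `d/dt log S = S'/S` and both denominators are
units. -/
theorem log_derivative_Sx
    (Y S : PowerSeries (RatFunc ℚ))
    (hY0 : PowerSeries.constantCoeff (R := RatFunc ℚ) Y = 0)
    (hY : Y = PowerSeries.X *
      (Y ^ 3 + PowerSeries.C (R := RatFunc ℚ) RatFunc.X * Y + 1))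
    (hS : S * (1 - PowerSeries.X * PowerSeries.C (R := RatFunc ℚ) RatFunc.X -
      3 * PowerSeries.X * Y ^ 2) = 1) :
    PowerSeries.derivativeFun S *
        (4 * (1 - PowerSeries.C (R := RatFunc ℚ) RatFunc.X * PowerSeries.X) ^ 3 -
          27 * PowerSeries.X ^ 3) =
      S * (PowerSeries.C (R := RatFunc ℚ) (4 * RatFunc.X ^ 3 + 27) * PowerSeries.X ^ 2 -
            PowerSeries.C (R := RatFunc ℚ) (8 * RatFunc.X ^ 2) * PowerSeries.X +
            PowerSeries.C (R := RatFunc ℚ) (4 * RatFunc.X) +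
            9 * PowerSeries.X * Y) := by
  have hd : ∀ f : PowerSeries (RatFunc ℚ),
      PowerSeries.derivativeFun f = d⁄dX (RatFunc ℚ) f := fun _ => rfl
  set Cb : PowerSeries (RatFunc ℚ) := PowerSeries.C (R := RatFunc ℚ) RatFunc.X with hCb
  set Y' : PowerSeries (RatFunc ℚ) := d⁄dX (RatFunc ℚ) Y with hY'def
  set S' : PowerSeries (RatFunc ℚ) := d⁄dX (RatFunc ℚ) S with hS'def
  set D : PowerSeries (RatFunc ℚ) :=
    1 - PowerSeries.X * Cb - 3 * PowerSeries.X * Y ^ 2 with hD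
  -- derivative of the algebraic equation for Y
  have hYd : Y' * D = Y ^ 3 + Cb * Y + 1 := by
    have h := congrArg (d⁄dX (RatFunc ℚ)) hY
    rw [hCb] at h
    simp only [Derivation.leibniz, Derivation.leibniz_pow, map_add,
      Derivation.map_one_eq_zero, derivative_X, derivative_C, smul_eq_mul,
      nsmul_eq_mul, Nat.cast_ofNat, ← hY'def] at h
    rw [hD, hCb]
    linear_combination h
  -- derivative of the equation for S
  have hSd : S' * D + S * (-Cb - 3 * Y ^ 2 - 6 * PowerSeries.X * Y * Y') = 0 := by
    have h3 : (3 : PowerSeries (RatFunc ℚ)) = PowerSeries.C (R := RatFunc ℚ) 3 :=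
      (map_ofNat _ 3).symm
    have h := congrArg (d⁄dX (RatFunc ℚ)) hS
    rw [hD, hCb, h3] at h
    rw [hD, hCb]
    simp only [Derivation.leibniz, Derivation.leibniz_pow, map_add, map_sub,
      Derivation.map_one_eq_zero, derivative_X, derivative_C, smul_eq_mul,
      nsmul_eq_mul, Nat.cast_ofNat, ← hY'def, ← hS'def] at h
    rw [← h3] at h
    linear_combination h
  set P : PowerSeries (RatFunc ℚ) :=
    4 * (1 - Cb * PowerSeries.X) ^ 3 - 27 * PowerSeries.X ^ 3 with hP
  -- the key cross-multiplied identity, times D^2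
  have key : S' * P * D ^ 2 =
      S * (Cb ^ 3 * 4 * PowerSeries.X ^ 2 + 27 * PowerSeries.X ^ 2
        - 8 * Cb ^ 2 * PowerSeries.X + 4 * Cb + 9 * PowerSeries.X * Y) * D ^ 2 := by
    rw [hP, hD]
    linear_combination (P * D) * hSd + (6 * PowerSeries.X * Y * S * P) * hYd +
      (S * (12 * Y + 27 * PowerSeries.X + 81 * PowerSeries.X ^ 2 * Y ^ 2
        - 27 * PowerSeries.X ^ 2 * Cb - 36 * PowerSeries.X ^ 2 * Cb ^ 2 * Y
        + 162 * PowerSeries.X ^ 3 * Y + 24 * PowerSeries.X ^ 3 * Cb ^ 3 * Y)) * hY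
  rw [hd, ← hS'def]
  simp only [map_add, map_mul, map_pow, map_ofNat]
  rw [← hCb]
  have hS2 : S * D = 1 := by rw [hD]; exact hS
  linear_combination S ^ 2 * key -
    ((S' * P - S * (Cb ^ 3 * 4 * PowerSeries.X ^ 2 + 27 * PowerSeries.X ^ 2
      - 8 * Cb ^ 2 * PowerSeries.X + 4 * Cb + 9 * PowerSeries.X * Y)) * (1 + S * D)) * hS2
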